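/- Suppose f is submodular with f(∅) ≥ 0, S = {e₁,…,e_l} is produced by a greedy procedure adding elements in order of maximal marginal gain per cost, C = {e'₁,…,e'_k} is disjoint from S, and at every greedy step each element of C was available but not chosen (so each greedy choice had at least as large a marginal-gain-to-cost ratio as any element of C). If the total cost of S strictly exceeds the total cost of C, then f(S) ≥ (1/2) · f(S ∪ C). -/

import Mathlib

def Submodular {U : Type*} [DecidableEq U] (f : Finset U → ℝ) : Prop :=
  ∀ X Y : Finset U, X ⊆ Y → ∀ e ∉ Y, f (insert e Y) - f Y ≤ f (insert e X) - f X

private lemma tele (g : ℕ → ℝ) (l : ℕ) :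
    ∑ i ∈ Finset.Icc 1 l, (g i - g (i - 1)) = g l - g 0 := by
  induction l with
  | zero => simp
  | succ n ih =>
    rw [show Finset.Icc 1 (n + 1) = insert (n + 1) (Finset.Icc 1 n) from by
      ext x; simp [Finset.mem_Icc]; omega,
      Finset.sum_insert (by simp), ih]
    simp only [Nat.add_sub_cancel]
    ring

private lemma sum_img_le {U : Type*} [DecidableEq U] (s : Finset ℕ) (g : ℕ → U)
    (h : U → ℝ) (hh : ∀ x, 0 ≤ h x) :
    ∑ x ∈ s.image g, h x ≤ ∑ j ∈ s, h (g j) := by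
  induction s using Finset.induction with
  | empty => simp
  | @insert a s ha ih =>
    rw [Finset.image_insert, Finset.sum_insert ha]
    by_cases hmem : g a ∈ s.image g
    · rw [Finset.insert_eq_self.mpr hmem]
      have := hh (g a); linarith
    · rw [Finset.sum_insert hmem]; linarith

private lemma union_bound {U : Type*} [DecidableEq U] (f : Finset U → ℝ)
    (hsub : Submodular f) (T : Finset U) :
    ∀ A : Finset U, Disjoint T A →
      f (A ∪ T) ≤ f A + ∑ x ∈ T, (f (insert x A) - f A) := by
  induction T using Finset.induction with
  | empty => simp
  | @insert a T ha ih =>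
    intro A hd
    have hdT : Disjoint T A := (Finset.disjoint_insert_left.mp hd).2
    have haA : a ∉ A := (Finset.disjoint_insert_left.mp hd).1
    have haAT : a ∉ A ∪ T := by simp [haA, ha]
    have h1 : f (insert a (A ∪ T)) - f (A ∪ T) ≤ f (insert a A) - f A :=
      hsub A (A ∪ T) Finset.subset_union_left a haAT
    have h2 := ih A hdT
    rw [Finset.sum_insert ha]
    have : A ∪ insert a T = insert a (A ∪ T) := by
      ext x; simp [or_comm, or_left_comm]
    rw [this]
    linarith

theorem stmt_2 {U : Type*} [DecidableEq U] (f : Finset U → ℝ) (c : U → ℝ)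
    (hsub : Submodular f) (hf0 : 0 ≤ f ∅) (hc : ∀ x, 0 < c x)
    (l k : ℕ) (hl : 1 ≤ l) (hk : 1 ≤ k) (e e' : ℕ → U)
    (S : ℕ → Finset U) (hS : ∀ i, S i = (Finset.Icc 1 i).image e)
    (C : Finset U) (hC : C = (Finset.Icc 1 k).image e')
    (hdisj : Disjoint C (S l))
    (hmono : ∀ i, 1 ≤ i → i ≤ l → 0 ≤ f (S i) - f (S (i - 1)))
    (havail : ∀ i j, 1 ≤ i → i ≤ l → 1 ≤ j → j ≤ k →
      (f (S i) - f (S (i - 1))) / c (e i) ≥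
        (f (S (i - 1) ∪ {e' j}) - f (S (i - 1))) / c (e' j))
    (hcost : (∑ i ∈ Finset.Icc 1 l, c (e i)) > ∑ j ∈ Finset.Icc 1 k, c (e' j)) :
    f (S l) ≥ (1 / 2) * f (S l ∪ C) := by
  set A := ∑ x ∈ C, (f (insert x (S l)) - f (S l)) with hA
  -- Step 1
  have step1 : f (S l ∪ C) ≤ f (S l) + A := union_bound f hsub C (S l) hdisj
  -- sums of costs
  have hsumC' : (0:ℝ) < ∑ j ∈ Finset.Icc 1 k, c (e' j) :=
    Finset.sum_pos (fun j _ => hc _) (by rw [Finset.nonempty_Icc]; omega)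
  have hsumS : (0:ℝ) < ∑ i ∈ Finset.Icc 1 l, c (e i) :=
    Finset.sum_pos (fun i _ => hc _) (by rw [Finset.nonempty_Icc]; omega)
  have hCcost : ∑ x ∈ C, c x ≤ ∑ j ∈ Finset.Icc 1 k, c (e' j) := by
    rw [hC]; exact sum_img_le _ _ _ (fun x => (hc x).le)
  -- Step 2 : for each i, A ≤ (Δ i / c (e i)) * ∑ c (e' j)
  have step2 : ∀ i, 1 ≤ i → i ≤ l →
      A ≤ (f (S i) - f (S (i - 1))) / c (e i) * ∑ j ∈ Finset.Icc 1 k, c (e' j) := by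
    intro i hi1 hi2
    have hr : 0 ≤ (f (S i) - f (S (i - 1))) / c (e i) :=
      div_nonneg (hmono i hi1 hi2) (hc _).le
    have hAle : A ≤ ∑ x ∈ C, c x * ((f (S i) - f (S (i - 1))) / c (e i)) := by
      apply Finset.sum_le_sum
      intro x hx
      have hxS : x ∉ S l := Finset.disjoint_left.mp hdisj hx
      have hsubset : S (i - 1) ⊆ S l := by
        rw [hS, hS]
        exact Finset.image_subset_image (Finset.Icc_subset_Icc le_rfl (by omega))
      have h1 : f (insert x (S l)) - f (S l) ≤ f (insert x (S (i-1))) - f (S (i-1)) :=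
        hsub (S (i-1)) (S l) hsubset x hxS
      obtain ⟨j, hj, hjx⟩ : ∃ j ∈ Finset.Icc 1 k, e' j = x := by
        rw [hC] at hx; simpa using Finset.mem_image.mp hx
      have hav := havail i j hi1 hi2 (Finset.mem_Icc.mp hj).1 (Finset.mem_Icc.mp hj).2
      rw [hjx] at hav
      rw [ge_iff_le, div_le_div_iff₀ (hc x) (hc (e i))] at hav
      have h2 : f (S (i-1) ∪ {x}) = f (insert x (S (i-1))) := by
        congr 1; ext y; simp [Finset.mem_union, Finset.mem_insert, or_comm]
      rw [h2] at hav
      rw [mul_comm, div_mul_eq_mul_div, le_div_iff₀ (hc (e i))]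
      nlinarith [hc x, hc (e i), h1, hav]
    calc A ≤ ∑ x ∈ C, c x * ((f (S i) - f (S (i - 1))) / c (e i)) := hAle
      _ = (∑ x ∈ C, c x) * ((f (S i) - f (S (i - 1))) / c (e i)) := by
          rw [← Finset.sum_mul]
      _ ≤ (∑ j ∈ Finset.Icc 1 k, c (e' j)) * ((f (S i) - f (S (i - 1))) / c (e i)) := by
          apply mul_le_mul_of_nonneg_right hCcost hr
      _ = _ := by ring
  -- Step 3: multiply by c (e i) and sum
  have hΔsum : ∑ i ∈ Finset.Icc 1 l, (f (S i) - f (S (i - 1))) = f (S l) - f (S 0) :=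
    tele (fun i => f (S i)) l
  have hS0 : f (S 0) = f ∅ := by rw [hS 0]; simp
  have hΔnn : 0 ≤ f (S l) - f (S 0) := by
    rw [← hΔsum]
    exact Finset.sum_nonneg fun i hi =>
      hmono i (Finset.mem_Icc.mp hi).1 (Finset.mem_Icc.mp hi).2
  have step3 : (∑ i ∈ Finset.Icc 1 l, c (e i)) * A ≤
      (∑ j ∈ Finset.Icc 1 k, c (e' j)) * (f (S l) - f (S 0)) := by
    rw [Finset.sum_mul, ← hΔsum, Finset.mul_sum]
    apply Finset.sum_le_sum
    intro i hi
    obtain ⟨hi1, hi2⟩ := Finset.mem_Icc.mp hi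
    have h2 := step2 i hi1 hi2
    have hpos := hc (e i)
    have key : c (e i) * ((f (S i) - f (S (i - 1))) / c (e i)
          * ∑ j ∈ Finset.Icc 1 k, c (e' j)) =
        (∑ j ∈ Finset.Icc 1 k, c (e' j)) * (f (S i) - f (S (i - 1))) := by
      field_simp
    have h3 := mul_le_mul_of_nonneg_left h2 hpos.le
    rw [key] at h3
    exact h3
  have hAleΔ : A ≤ f (S l) - f (S 0) := by
    have h2 : (∑ j ∈ Finset.Icc 1 k, c (e' j)) * (f (S l) - f (S 0)) ≤
        (∑ i ∈ Finset.Icc 1 l, c (e i)) * (f (S l) - f (S 0)) :=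
      mul_le_mul_of_nonneg_right hcost.le hΔnn
    exact (mul_le_mul_iff_right₀ hsumS).mp (le_trans step3 h2)
  rw [hS0] at hAleΔ
  linarith
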